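/- In the presented group πₙ, the subgroup Γₙ generated by {s₁², s₂², …, sₙ²} is a nilpotent group. Consequently, πₙ contains a nilpotent subgroup of finite index, i.e., πₙ is virtually nilpotent. -/

import Mathlib

open FreeGroup

/-- The relator set for the fundamental group `πₙ` of the total space of an iterated
`S¹`-bundle of height `n`: for `i < j`,
`sᵢ sⱼ sᵢ⁻¹ = sₙ^{aⁿᵢⱼ} ⋯ s_{j+1}^{a^{j+1}ᵢⱼ} sⱼ^{εᵢⱼ}` (indices `0`-based). -/
def iterRels (n : ℕ) (ε : Fin n → Fin n → ℤ) (a : Fin n → Fin n → Fin n → ℤ) :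
    Set (FreeGroup (Fin n)) :=
  { r | ∃ i j : Fin n, i < j ∧
      r = of i * of j * (of i)⁻¹ *
        ((((List.finRange n).filter fun k => decide (j < k)).reverse.map
            fun k => of k ^ a i j k).prod * of j ^ ε i j)⁻¹ }

/-- The subgroup `Γₙ` of `πₙ` generated by the squares `s₁², …, sₙ²`. -/
def GammaN (n : ℕ) (ε : Fin n → Fin n → ℤ) (a : Fin n → Fin n → Fin n → ℤ) :
    Subgroup (PresentedGroup (iterRels n ε a)) :=
  Subgroup.closure { x | ∃ i : Fin n, x = (PresentedGroup.of i : PresentedGroup (iterRels n ε a)) ^ 2 }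

namespace IterBundle

/-! ### Generic helpers for presented groups -/

theorem lift_of_eq_mk {α : Type*} (rels : Set (FreeGroup α)) :
    FreeGroup.lift (fun i => (PresentedGroup.of i : PresentedGroup rels)) =
      PresentedGroup.mk rels :=
  FreeGroup.ext_hom _ _ fun i => by simp [PresentedGroup.of]

theorem mk_eq_one {α : Type*} {rels : Set (FreeGroup α)} {r : FreeGroup α} (h : r ∈ rels) :
    PresentedGroup.mk rels r = 1 :=
  (QuotientGroup.eq_one_iff r).mpr (Subgroup.subset_normalClosure h)

/-- The natural map between presented groups induced by enlarging the relator set. -/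
def liftHom {α : Type*} {r1 r2 : Set (FreeGroup α)} (h : r1 ⊆ r2) :
    PresentedGroup r1 →* PresentedGroup r2 :=
  PresentedGroup.toGroup (f := fun i => PresentedGroup.of i)
    (fun r hr => by rw [lift_of_eq_mk]; exact mk_eq_one (h hr))

@[simp] theorem liftHom_of {α : Type*} {r1 r2 : Set (FreeGroup α)} (h : r1 ⊆ r2) (x : α) :
    liftHom h (PresentedGroup.of x) = PresentedGroup.of x :=
  PresentedGroup.toGroup.of _

theorem liftHom_mk {α : Type*} {r1 r2 : Set (FreeGroup α)} (h : r1 ⊆ r2) (y : FreeGroup α) :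
    liftHom h (PresentedGroup.mk r1 y) = PresentedGroup.mk r2 y := by
  have h2 : (liftHom h).comp (PresentedGroup.mk r1) = PresentedGroup.mk r2 :=
    FreeGroup.ext_hom _ _ fun i => by
      exact liftHom_of h i
  exact DFunLike.congr_fun h2 y

theorem all_eq_one {α : Type*} {rels : Set (FreeGroup α)}
    (h : ∀ i : α, (PresentedGroup.of i : PresentedGroup rels) = 1)
    (x : PresentedGroup rels) : x = 1 := by
  induction x with
  | _ z =>
    have h2 : PresentedGroup.mk rels = (1 : FreeGroup α →* PresentedGroup rels) :=
      FreeGroup.ext_hom _ _ fun i => by rw [MonoidHom.one_apply]; exact h i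
    exact DFunLike.congr_fun h2 z

theorem mem_normalizer_zpowers {G : Type*} [Group G] {t g : G}
    (h1 : g * t * g⁻¹ ∈ Subgroup.zpowers t) (h2 : g⁻¹ * t * g ∈ Subgroup.zpowers t) :
    g ∈ Subgroup.normalizer (Subgroup.zpowers t : Set G) := by
  obtain ⟨e, he⟩ := Subgroup.mem_zpowers_iff.mp h1
  obtain ⟨f, hf⟩ := Subgroup.mem_zpowers_iff.mp h2
  rw [Subgroup.mem_normalizer_iff]
  intro h
  constructor
  · rintro hm
    obtain ⟨m, rfl⟩ := Subgroup.mem_zpowers_iff.mp hm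
    refine Subgroup.mem_zpowers_iff.mpr ⟨e * m, ?_⟩
    rw [zpow_mul, he, conj_zpow]
  · intro hm
    obtain ⟨m, hm'⟩ := Subgroup.mem_zpowers_iff.mp hm
    have : h = g⁻¹ * t ^ m * g := by rw [hm']; group
    rw [this]
    refine Subgroup.mem_zpowers_iff.mpr ⟨f * m, ?_⟩
    rw [zpow_mul, hf, show g⁻¹ * t * g = g⁻¹ * t * g⁻¹⁻¹ by rw [inv_inv], conj_zpow, inv_inv]

theorem centralizer_normal_of_normal {G : Type*} [Group G] (A : Subgroup G) [hA : A.Normal] :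
    (Subgroup.centralizer (A : Set G)).Normal := by
  constructor
  intro c hc g
  rw [Subgroup.mem_centralizer_iff] at hc ⊢
  intro h hh
  have hh' : g⁻¹ * h * g ∈ A := by
    have := hA.conj_mem h hh g⁻¹
    simpa using this
  have hcc := hc _ hh'
  calc h * (g * c * g⁻¹) = g * ((g⁻¹ * h * g) * c) * g⁻¹ := by group
    _ = g * (c * (g⁻¹ * h * g)) * g⁻¹ := by rw [hcc]
    _ = (g * c * g⁻¹) * h := by group

theorem ker_liftHom_le {α : Type*} {r1 r2 : Set (FreeGroup α)} (h : r1 ⊆ r2)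
    {A : Subgroup (PresentedGroup r1)} (hA : A.Normal)
    (himg : ∀ r ∈ r2, PresentedGroup.mk r1 r ∈ A) :
    (liftHom h).ker ≤ A := by
  intro z hz
  obtain ⟨y, rfl⟩ := PresentedGroup.mk_surjective r1 z
  rw [MonoidHom.mem_ker, liftHom_mk] at hz
  have hy : y ∈ Subgroup.normalClosure r2 := (QuotientGroup.eq_one_iff y).mp hz
  have hz' : PresentedGroup.mk r1 y ∈
      Subgroup.map (PresentedGroup.mk r1) (Subgroup.normalClosure r2) := ⟨y, hy, rfl⟩
  rw [Subgroup.map_normalClosure r2 (PresentedGroup.mk r1) (PresentedGroup.mk_surjective r1)]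
    at hz'
  haveI := hA
  refine Subgroup.normalClosure_le_normal ?_ hz'
  rintro x ⟨r, hr, rfl⟩
  exact himg r hr

/-! ### The relation in quotients killing high generators -/

variable {n : ℕ} {ε : Fin n → Fin n → ℤ} {a : Fin n → Fin n → Fin n → ℤ}

theorem conj_rel {rels : Set (FreeGroup (Fin n))} (hsub : iterRels n ε a ⊆ rels)
    {i j : Fin n} (hij : i < j)
    (hkill : ∀ m : Fin n, j < m → (PresentedGroup.of m : PresentedGroup rels) = 1) :
    (PresentedGroup.of i * PresentedGroup.of j * (PresentedGroup.of i)⁻¹ :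
      PresentedGroup rels) = PresentedGroup.of j ^ ε i j := by
  have hr := mk_eq_one (hsub ⟨i, j, hij, rfl⟩)
  simp only [_root_.map_mul, _root_.map_inv, _root_.map_zpow] at hr
  have hw : PresentedGroup.mk rels
      ((((List.finRange n).filter fun k => decide (j < k)).reverse.map
          fun k => of k ^ a i j k).prod) = 1 := by
    rw [_root_.map_list_prod]
    apply List.prod_eq_one
    intro x hx
    simp only [List.map_map, List.mem_map] at hx
    obtain ⟨m, hm, rfl⟩ := hx
    have hjm : j < m := of_decide_eq_true (List.mem_filter.mp (List.mem_reverse.mp hm)).2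
    simp only [Function.comp_apply, _root_.map_zpow]
    rw [show PresentedGroup.mk rels (of m) = PresentedGroup.of m from rfl, hkill m hjm, one_zpow]
  rw [hw, one_mul] at hr
  exact mul_inv_eq_one.mp hr

/-! ### The chain of quotients killing generators of index `≥ k` -/

/-- The generators of index at least `k`, as relators. -/
def hiGens (n k : ℕ) : Set (FreeGroup (Fin n)) := {x | ∃ m : Fin n, k ≤ m.val ∧ x = of m}

theorem hiGens_antitone {k : ℕ} : hiGens n (k + 1) ⊆ hiGens n k := by
  rintro x ⟨m, hm, rfl⟩
  exact ⟨m, le_trans (Nat.le_succ k) hm, rfl⟩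

theorem kill (B : Set (FreeGroup (Fin n))) {k : ℕ} (m : Fin n) (hm : k ≤ m.val) :
    (PresentedGroup.of m : PresentedGroup (B ∪ hiGens n k)) = 1 :=
  mk_eq_one (Or.inr ⟨m, hm, rfl⟩)

theorem conj_t (B : Set (FreeGroup (Fin n))) (hB : iterRels n ε a ⊆ B)
    (hε : ∀ i j : Fin n, i < j → ε i j = 1 ∨ ε i j = -1)
    {k : ℕ} (hk : k < n) (i : Fin n) :
    ∃ e : ℤ, (e = 1 ∨ e = -1) ∧
      (PresentedGroup.of i * PresentedGroup.of ⟨k, hk⟩ * (PresentedGroup.of i)⁻¹ :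
        PresentedGroup (B ∪ hiGens n (k + 1))) = PresentedGroup.of ⟨k, hk⟩ ^ e := by
  rcases lt_trichotomy i.val k with h | h | h
  · have hij : i < (⟨k, hk⟩ : Fin n) := h
    refine ⟨ε i ⟨k, hk⟩, hε i ⟨k, hk⟩ hij, ?_⟩
    exact conj_rel (hB.trans Set.subset_union_left) hij
      (fun m hm => kill B m (Nat.succ_le_of_lt hm))
  · have : i = ⟨k, hk⟩ := Fin.ext h
    subst this
    exact ⟨1, Or.inl rfl, by rw [zpow_one, mul_inv_cancel_right]⟩
  · refine ⟨1, Or.inl rfl, ?_⟩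
    rw [kill B i h, zpow_one, one_mul, inv_one, mul_one]

theorem conj_t' (B : Set (FreeGroup (Fin n))) (hB : iterRels n ε a ⊆ B)
    (hε : ∀ i j : Fin n, i < j → ε i j = 1 ∨ ε i j = -1)
    {k : ℕ} (hk : k < n) (i : Fin n) :
    ∃ e : ℤ,
      (PresentedGroup.of i * PresentedGroup.of ⟨k, hk⟩ * (PresentedGroup.of i)⁻¹ :
        PresentedGroup (B ∪ hiGens n (k + 1))) = PresentedGroup.of ⟨k, hk⟩ ^ e ∧
      ((PresentedGroup.of i)⁻¹ * PresentedGroup.of ⟨k, hk⟩ * PresentedGroup.of i :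
        PresentedGroup (B ∪ hiGens n (k + 1))) = PresentedGroup.of ⟨k, hk⟩ ^ e ∧
      ((PresentedGroup.of i) ^ 2 * PresentedGroup.of ⟨k, hk⟩ * ((PresentedGroup.of i) ^ 2)⁻¹ :
        PresentedGroup (B ∪ hiGens n (k + 1))) = PresentedGroup.of ⟨k, hk⟩ := by
  obtain ⟨e, he, hc⟩ := conj_t B hB hε hk i
  set t : PresentedGroup (B ∪ hiGens n (k + 1)) := PresentedGroup.of ⟨k, hk⟩ with ht
  set x : PresentedGroup (B ∪ hiGens n (k + 1)) := PresentedGroup.of i with hx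
  have he2 : (t ^ e) ^ e = t := by rcases he with rfl | rfl <;> simp
  have h3 : x * t ^ e * x⁻¹ = t := by rw [← conj_zpow, hc, he2]
  refine ⟨e, hc, ?_, ?_⟩
  · calc x⁻¹ * t * x = x⁻¹ * (x * t ^ e * x⁻¹) * x := by rw [h3]
      _ = t ^ e := by group
  · have h4 : x ^ 2 * t * (x ^ 2)⁻¹ = x * (x * t * x⁻¹) * x⁻¹ := by
      simp only [pow_two, mul_inv_rev, mul_assoc]
    rw [h4, hc, h3]

theorem zpowers_normal (B : Set (FreeGroup (Fin n))) (hB : iterRels n ε a ⊆ B)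
    (hε : ∀ i j : Fin n, i < j → ε i j = 1 ∨ ε i j = -1) {k : ℕ} (hk : k < n) :
    (Subgroup.zpowers
      (PresentedGroup.of ⟨k, hk⟩ : PresentedGroup (B ∪ hiGens n (k + 1)))).Normal := by
  rw [← Subgroup.normalizer_eq_top_iff]
  rw [eq_top_iff]
  intro x _
  refine PresentedGroup.generated_by _ _ (fun j => ?_) x
  obtain ⟨e, hc, hinv, -⟩ := conj_t' B hB hε hk j
  have h1 : PresentedGroup.of j * PresentedGroup.of ⟨k, hk⟩ * (PresentedGroup.of j)⁻¹ ∈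
      Subgroup.zpowers (PresentedGroup.of ⟨k, hk⟩ :
        PresentedGroup (B ∪ hiGens n (k + 1))) :=
    Subgroup.mem_zpowers_iff.mpr ⟨e, hc.symm⟩
  have h2 : (PresentedGroup.of j)⁻¹ * PresentedGroup.of ⟨k, hk⟩ * PresentedGroup.of j ∈
      Subgroup.zpowers (PresentedGroup.of ⟨k, hk⟩ :
        PresentedGroup (B ∪ hiGens n (k + 1))) :=
    Subgroup.mem_zpowers_iff.mpr ⟨e, hinv.symm⟩
  exact mem_normalizer_zpowers h1 h2

theorem sq_mem_centralizer (B : Set (FreeGroup (Fin n))) (hB : iterRels n ε a ⊆ B)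
    (hε : ∀ i j : Fin n, i < j → ε i j = 1 ∨ ε i j = -1) {k : ℕ} (hk : k < n) (i : Fin n) :
    ((PresentedGroup.of i : PresentedGroup (B ∪ hiGens n (k + 1))) ^ 2) ∈
      Subgroup.centralizer
        (Subgroup.zpowers
          (PresentedGroup.of ⟨k, hk⟩ : PresentedGroup (B ∪ hiGens n (k + 1))) : Set _) := by
  obtain ⟨e, hc, hinv, hsq⟩ := conj_t' B hB hε hk i
  rw [Subgroup.mem_centralizer_iff]
  intro h hh
  obtain ⟨m, rfl⟩ := Subgroup.mem_zpowers_iff.mp hh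
  have h4 : (PresentedGroup.of i : PresentedGroup (B ∪ hiGens n (k + 1))) ^ 2 *
      (PresentedGroup.of ⟨k, hk⟩ : PresentedGroup (B ∪ hiGens n (k + 1))) ^ m *
      ((PresentedGroup.of i : PresentedGroup (B ∪ hiGens n (k + 1))) ^ 2)⁻¹ =
      (PresentedGroup.of ⟨k, hk⟩ : PresentedGroup (B ∪ hiGens n (k + 1))) ^ m := by
    rw [← conj_zpow, hsq]
  rw [mul_inv_eq_iff_eq_mul] at h4
  exact h4.symm

/-- The canonical map between successive quotients of the chain. -/
def stepHom (B : Set (FreeGroup (Fin n))) (k : ℕ) :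
    PresentedGroup (B ∪ hiGens n (k + 1)) →* PresentedGroup (B ∪ hiGens n k) :=
  liftHom (Set.union_subset_union_right B hiGens_antitone)

/-- The canonical map from `πₙ` to the `k`-th quotient of the chain. -/
def phiHom (B : Set (FreeGroup (Fin n))) (hB : iterRels n ε a ⊆ B) (k : ℕ) :
    PresentedGroup (iterRels n ε a) →* PresentedGroup (B ∪ hiGens n k) :=
  liftHom (hB.trans Set.subset_union_left)

theorem step_comp (B : Set (FreeGroup (Fin n))) (hB : iterRels n ε a ⊆ B) (k : ℕ) :
    (stepHom B k).comp (phiHom B hB (k + 1)) = phiHom B hB k := by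
  ext i
  simp [stepHom, phiHom]

theorem phi_surjective (B : Set (FreeGroup (Fin n))) (hB : iterRels n ε a ⊆ B) (k : ℕ) :
    Function.Surjective (phiHom B hB k) := by
  intro z
  obtain ⟨y, rfl⟩ := PresentedGroup.mk_surjective _ z
  exact ⟨PresentedGroup.mk _ y, liftHom_mk _ y⟩

theorem ker_step_le (B : Set (FreeGroup (Fin n))) {k : ℕ} (hk : k < n)
    {A : Subgroup (PresentedGroup (B ∪ hiGens n (k + 1)))} (hA : A.Normal)
    (htA : (PresentedGroup.of ⟨k, hk⟩ : PresentedGroup (B ∪ hiGens n (k + 1))) ∈ A) :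
    (stepHom B k).ker ≤ A := by
  refine ker_liftHom_le _ hA ?_
  rintro r (hr | ⟨m, hm, rfl⟩)
  · rw [mk_eq_one (Or.inl hr)]; exact one_mem A
  · by_cases h : k + 1 ≤ m.val
    · rw [show PresentedGroup.mk _ (of m) = PresentedGroup.of m from rfl, kill B m h]
      exact one_mem A
    · have hmk : m = ⟨k, hk⟩ := Fin.ext (le_antisymm (Nat.lt_succ_iff.mp (not_le.mp h)) hm)
      rw [show PresentedGroup.mk _ (of m) = PresentedGroup.of m from rfl, hmk]
      exact htA

/-! ### Nilpotency of the normal closure of the squares -/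

variable (n ε a) in
/-- The normal closure of the squares of the generators. -/
def Hsq : Subgroup (PresentedGroup (iterRels n ε a)) :=
  Subgroup.normalClosure
    { x | ∃ i : Fin n, x = (PresentedGroup.of i : PresentedGroup (iterRels n ε a)) ^ 2 }

open scoped commutatorElement in
theorem comm_key (hε : ∀ i j : Fin n, i < j → ε i j = 1 ∨ ε i j = -1)
    {k : ℕ} (hk : k < n) {x y : PresentedGroup (iterRels n ε a)}
    (hx : x ∈ (phiHom (iterRels n ε a) subset_rfl k).ker) (hy : y ∈ Hsq n ε a) :
    ⁅x, y⁆ ∈ (phiHom (iterRels n ε a) subset_rfl (k + 1)).ker := by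
  haveI hA := zpowers_normal (iterRels n ε a) subset_rfl hε hk
  have hstep : (phiHom (iterRels n ε a) subset_rfl (k + 1)) x ∈
      (stepHom (iterRels n ε a) k).ker := by
    rw [MonoidHom.mem_ker, ← MonoidHom.comp_apply, step_comp]
    exact MonoidHom.mem_ker.mp hx
  have hxA : (phiHom (iterRels n ε a) subset_rfl (k + 1)) x ∈
      Subgroup.zpowers (PresentedGroup.of ⟨k, hk⟩ :
        PresentedGroup (iterRels n ε a ∪ hiGens n (k + 1))) :=
    ker_step_le (iterRels n ε a) hk hA (Subgroup.mem_zpowers _) hstep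
  have hyC : (phiHom (iterRels n ε a) subset_rfl (k + 1)) y ∈ Subgroup.centralizer
      ((Subgroup.zpowers (PresentedGroup.of ⟨k, hk⟩ :
        PresentedGroup (iterRels n ε a ∪ hiGens n (k + 1)))) : Set _) := by
    have hmem := Subgroup.mem_map_of_mem (phiHom (iterRels n ε a) subset_rfl (k + 1)) hy
    rw [Hsq, Subgroup.map_normalClosure _ _
      (phi_surjective (iterRels n ε a) subset_rfl (k + 1))] at hmem
    haveI := centralizer_normal_of_normal (Subgroup.zpowers (PresentedGroup.of ⟨k, hk⟩ :
      PresentedGroup (iterRels n ε a ∪ hiGens n (k + 1))))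
    refine Subgroup.normalClosure_le_normal ?_ hmem
    rintro z ⟨s, ⟨i, rfl⟩, rfl⟩
    rw [_root_.map_pow]
    rw [show (phiHom (iterRels n ε a) subset_rfl (k + 1)) (PresentedGroup.of i) =
      PresentedGroup.of i from liftHom_of _ i]
    exact sq_mem_centralizer (iterRels n ε a) subset_rfl hε hk i
  rw [MonoidHom.mem_ker, map_commutatorElement]
  exact commutatorElement_eq_one_iff_mul_comm.mpr
    (Subgroup.mem_centralizer_iff.mp hyC _ hxA)

theorem ker_phi_zero :
    (phiHom (iterRels n ε a) subset_rfl 0).ker = ⊤ := by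
  rw [eq_top_iff]
  intro x _
  rw [MonoidHom.mem_ker]
  exact all_eq_one (fun i => kill _ i (Nat.zero_le _)) _

theorem ker_phi_n :
    (phiHom (iterRels n ε a) subset_rfl n).ker = ⊥ := by
  rw [eq_bot_iff]
  intro x hx
  rw [MonoidHom.mem_ker] at hx
  have hsub2 : iterRels n ε a ∪ hiGens n n ⊆ iterRels n ε a := by
    rintro z (hz | ⟨m, hm, rfl⟩)
    · exact hz
    · exact absurd m.isLt (not_lt.mpr hm)
  have hcomp : (liftHom hsub2).comp (phiHom (iterRels n ε a) subset_rfl n) =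
      MonoidHom.id _ := by
    ext i
    simp [phiHom]
  have h1 := DFunLike.congr_fun hcomp x
  rw [MonoidHom.comp_apply, hx, _root_.map_one] at h1
  rw [Subgroup.mem_bot]
  exact h1.symm

theorem map_lcs_le (hε : ∀ i j : Fin n, i < j → ε i j = 1 ∨ ε i j = -1) :
    ∀ k, k ≤ n →
      Subgroup.map (Hsq n ε a).subtype (lowerCentralSeries (⊤ : Subgroup ↥(Hsq n ε a)) k) ≤
        (phiHom (iterRels n ε a) subset_rfl k).ker := by
  intro k
  induction k with
  | zero =>
    intro _
    rw [ker_phi_zero]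
    exact le_top
  | succ k ih =>
    intro hk
    have hkn : k < n := hk
    have h1 : lowerCentralSeries (⊤ : Subgroup ↥(Hsq n ε a)) (k + 1) =
        ⁅lowerCentralSeries (⊤ : Subgroup ↥(Hsq n ε a)) k, (⊤ : Subgroup ↥(Hsq n ε a))⁆ := rfl
    rw [h1, Subgroup.map_commutator, Subgroup.commutator_le]
    intro g1 hg1 g2 hg2
    have hx := ih (Nat.le_of_lt hkn) hg1
    obtain ⟨y, -, rfl⟩ := hg2
    exact comm_key hε hkn hx y.2

theorem Hsq_nilpotent (hε : ∀ i j : Fin n, i < j → ε i j = 1 ∨ ε i j = -1) :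
    Group.IsNilpotent ↥(Hsq n ε a) := by
  rw [nilpotent_iff_lowerCentralSeries]
  refine ⟨n, ?_⟩
  have h := map_lcs_le (a := a) hε n le_rfl
  rw [ker_phi_n] at h
  have h2 := le_bot_iff.mp h
  rwa [Subgroup.map_eq_bot_iff, Subgroup.ker_subtype, le_bot_iff] at h2

/-! ### Finiteness of the quotient by the squares -/

variable (n ε a) in
/-- The relators of `πₙ` together with the squares of the generators. -/
def B2 : Set (FreeGroup (Fin n)) :=
  iterRels n ε a ∪ {x | ∃ i : Fin n, x = of i ^ 2}

theorem finite_chain (hε : ∀ i j : Fin n, i < j → ε i j = 1 ∨ ε i j = -1) :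
    ∀ k, k ≤ n → Finite (PresentedGroup (B2 n ε a ∪ hiGens n k)) := by
  intro k
  induction k with
  | zero =>
    intro _
    haveI : Subsingleton (PresentedGroup (B2 n ε a ∪ hiGens n 0)) :=
      ⟨fun x y => (all_eq_one (fun i => kill _ i (Nat.zero_le _)) x).trans
        (all_eq_one (fun i => kill _ i (Nat.zero_le _)) y).symm⟩
    exact Finite.of_subsingleton
  | succ k ih =>
    intro hk
    have hkn : k < n := hk
    haveI hF := ih (Nat.le_of_lt hkn)
    set f := stepHom (B2 n ε a) k with hfdef
    set t : PresentedGroup (B2 n ε a ∪ hiGens n (k + 1)) :=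
      PresentedGroup.of ⟨k, hkn⟩ with htdef
    have ht2 : t ^ 2 = 1 := by
      have h := mk_eq_one (rels := B2 n ε a ∪ hiGens n (k + 1))
        (Or.inl (Or.inr ⟨(⟨k, hkn⟩ : Fin n), rfl⟩))
      rw [_root_.map_pow] at h
      exact h
    have hfin : ((Subgroup.zpowers t : Subgroup _) : Set (PresentedGroup (B2 n ε a ∪ hiGens n (k + 1)))).Finite :=
      (isOfFinOrder_iff_pow_eq_one.mpr ⟨2, two_pos, ht2⟩).finite_zpowers
    haveI := hfin.to_subtype
    haveI hA := zpowers_normal (B2 n ε a) Set.subset_union_left hε hkn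
    have hker : f.ker ≤ Subgroup.zpowers t :=
      ker_step_le (B2 n ε a) hkn hA (Subgroup.mem_zpowers _)
    haveI : Finite f.ker :=
      Finite.of_injective (Subgroup.inclusion hker) (Subgroup.inclusion_injective hker)
    haveI : Finite (PresentedGroup (B2 n ε a ∪ hiGens n (k + 1)) ⧸ f.ker) :=
      Finite.of_equiv _ (QuotientGroup.quotientKerEquivRange f).symm.toEquiv
    exact (finite_iff_subgroup_quotient f.ker).mpr ⟨inferInstance, inferInstance⟩

theorem ker_theta_le_Hsq :
    (phiHom (B2 n ε a) Set.subset_union_left n).ker ≤ Hsq n ε a := by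
  haveI : (Hsq n ε a).Normal := Subgroup.normalClosure_normal
  have hcoe : FreeGroup.lift
      (fun i => ((QuotientGroup.mk' (Hsq n ε a)) (PresentedGroup.of i))) =
      (QuotientGroup.mk' (Hsq n ε a)).comp (PresentedGroup.mk (iterRels n ε a)) :=
    FreeGroup.ext_hom _ _ fun i => by simp [PresentedGroup.of]
  have hrel : ∀ r ∈ B2 n ε a ∪ hiGens n n,
      FreeGroup.lift
        (fun i => ((QuotientGroup.mk' (Hsq n ε a)) (PresentedGroup.of i))) r = 1 := by
    rintro r ((hr | ⟨i, rfl⟩) | ⟨m, hm, rfl⟩)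
    · rw [hcoe, MonoidHom.comp_apply, mk_eq_one hr, _root_.map_one]
    · rw [hcoe, MonoidHom.comp_apply, _root_.map_pow]
      refine (QuotientGroup.eq_one_iff _).mpr ?_
      exact Subgroup.subset_normalClosure ⟨i, rfl⟩
    · exact absurd m.isLt (not_lt.mpr hm)
  set ρ := PresentedGroup.toGroup hrel with hρ
  have hcomp : ρ.comp (phiHom (B2 n ε a) Set.subset_union_left n) =
      QuotientGroup.mk' (Hsq n ε a) := by
    ext i
    rw [MonoidHom.comp_apply,
      show phiHom (B2 n ε a) Set.subset_union_left n (PresentedGroup.of i) =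
        PresentedGroup.of i from liftHom_of _ i]
    exact PresentedGroup.toGroup.of hrel
  intro x hx
  rw [MonoidHom.mem_ker] at hx
  have h1 := DFunLike.congr_fun hcomp x
  rw [MonoidHom.comp_apply, hx, _root_.map_one] at h1
  exact (QuotientGroup.eq_one_iff x).mp h1.symm

end IterBundle

/-- `Γₙ = ⟨s₁², …, sₙ²⟩` is a nilpotent group; consequently `πₙ` contains a nilpotent
subgroup of finite index, i.e. `πₙ` is virtually nilpotent. -/
theorem GammaN_nilpotent_and_virtually_nilpotent
    (n : ℕ) (hn : 1 ≤ n) (ε : Fin n → Fin n → ℤ) (a : Fin n → Fin n → Fin n → ℤ)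
    (hε : ∀ i j : Fin n, i < j → ε i j = 1 ∨ ε i j = -1) :
    Group.IsNilpotent ↥(GammaN n ε a) ∧
    ∃ H : Subgroup (PresentedGroup (iterRels n ε a)), H.FiniteIndex ∧ Group.IsNilpotent ↥H := by
  classical
  have hNil : Group.IsNilpotent ↥(IterBundle.Hsq n ε a) := IterBundle.Hsq_nilpotent hε
  have hle : GammaN n ε a ≤ IterBundle.Hsq n ε a :=
    (Subgroup.closure_le _).mpr Subgroup.subset_normalClosure
  constructor
  · haveI := hNil
    have e := Subgroup.subgroupOfEquivOfLe hle
    exact nilpotent_of_surjective e.toMonoidHom e.surjective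
  · refine ⟨IterBundle.Hsq n ε a, ?_, hNil⟩
    haveI hFin : Finite (PresentedGroup (IterBundle.B2 n ε a ∪ IterBundle.hiGens n n)) :=
      IterBundle.finite_chain hε n le_rfl
    have hker := IterBundle.ker_theta_le_Hsq (n := n) (ε := ε) (a := a)
    haveI : (IterBundle.phiHom (IterBundle.B2 n ε a)
        Set.subset_union_left n).ker.FiniteIndex := by
      constructor
      rw [Subgroup.index_ker]
      exact Nat.card_pos.ne'
    exact Subgroup.finiteIndex_of_le hker
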